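/- Suppose n₀ > 3 and Υ₀ = n₀/(n₀+1). Define Z₂(u,v) = (uv)^{2/(n₀−1)} [ (n₀−5)/(n₀−1)² + 2v/((n₀+1)(n₀−1)) − v²/(2(n₀+1)²) − uv/(n₀+1)² ]. Then there is a constant κ depending only on n₀, with the same sign as n₀ − 5, such that along every solution (u(ξ), v(ξ)) of the Newtonian system with u > 0, v > 0: dZ₂/dξ = κ (uv)^{2/(n₀−1)} (2(n₀+1) − (n₀−1)v)². In particular Z₂ is monotone along solutions (strictly, away from v = 2(n₀+1)/(n₀−1)) when n₀ ≠ 5, and Z₂ is a first integral when n₀ = 5. -/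

import Mathlib

open Set

/-- The function `Z₂` for polytropic index `n₀`. -/
noncomputable def Z2 (n₀ u v : ℝ) : ℝ :=
  (u * v) ^ ((2 : ℝ) / (n₀ - 1)) *
    ((n₀ - 5) / (n₀ - 1) ^ 2 + 2 * v / ((n₀ + 1) * (n₀ - 1)) -
      v ^ 2 / (2 * (n₀ + 1) ^ 2) - u * v / (n₀ + 1) ^ 2)

/-- For `n₀ > 3` there is a constant `κ` (depending only on `n₀`, with
the sign of `n₀ − 5`) such that along every positive solution of the Newtonian system
(with `Υ₀ = n₀/(n₀+1)`) one has
`dZ₂/dξ = κ (uv)^{2/(n₀−1)} (2(n₀+1) − (n₀−1)v)²`.  In particular `Z₂` is monotone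
along solutions when `n₀ ≠ 5` and is a first integral when `n₀ = 5`. -/
theorem stmt4
    (n₀ : ℝ) (hn₀ : 3 < n₀) :
    ∃ κ : ℝ,
      (5 < n₀ → 0 < κ) ∧ (n₀ < 5 → κ < 0) ∧ (n₀ = 5 → κ = 0) ∧
      ∀ u v : ℝ → ℝ,
        (∀ ξ : ℝ, HasDerivAt u (u ξ * (3 - u ξ - n₀ / (n₀ + 1) * v ξ)) ξ) →
        (∀ ξ : ℝ, HasDerivAt v (v ξ * (u ξ - 1 + (1 - n₀ / (n₀ + 1)) * v ξ)) ξ) →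
        (∀ ξ : ℝ, 0 < u ξ) → (∀ ξ : ℝ, 0 < v ξ) →
        (∀ ξ : ℝ,
          HasDerivAt (fun t => Z2 n₀ (u t) (v t))
            (κ * (u ξ * v ξ) ^ ((2 : ℝ) / (n₀ - 1)) *
              (2 * (n₀ + 1) - (n₀ - 1) * v ξ) ^ 2) ξ) ∧
        (5 < n₀ → Monotone (fun t => Z2 n₀ (u t) (v t))) ∧
        (n₀ < 5 → Antitone (fun t => Z2 n₀ (u t) (v t))) ∧
        (n₀ = 5 → ∀ ξ₁ ξ₂ : ℝ, Z2 n₀ (u ξ₁) (v ξ₁) = Z2 n₀ (u ξ₂) (v ξ₂)) := by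
  have h1 : (0:ℝ) < n₀ - 1 := by linarith
  have h2 : (0:ℝ) < n₀ + 1 := by linarith
  refine ⟨(n₀ - 5) / ((n₀ + 1) ^ 2 * (n₀ - 1) ^ 3), ?_, ?_, ?_, ?_⟩
  · intro h; exact div_pos (by linarith) (by positivity)
  · intro h; exact div_neg_of_neg_of_pos (by linarith) (by positivity)
  · intro h; rw [h]; norm_num
  intro u v hu hv hup hvp
  set κ := (n₀ - 5) / ((n₀ + 1) ^ 2 * (n₀ - 1) ^ 3) with hκ
  have key : ∀ ξ : ℝ,
      HasDerivAt (fun t => Z2 n₀ (u t) (v t))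
        (κ * (u ξ * v ξ) ^ ((2 : ℝ) / (n₀ - 1)) *
          (2 * (n₀ + 1) - (n₀ - 1) * v ξ) ^ 2) ξ := by
    intro ξ
    have hwpos : 0 < u ξ * v ξ := mul_pos (hup ξ) (hvp ξ)
    have hw : HasDerivAt (fun t => u t * v t)
        (u ξ * (3 - u ξ - n₀ / (n₀ + 1) * v ξ) * v ξ +
          u ξ * (v ξ * (u ξ - 1 + (1 - n₀ / (n₀ + 1)) * v ξ))) ξ := (hu ξ).mul (hv ξ)
    have hpow : HasDerivAt (fun t => (u t * v t) ^ ((2 : ℝ) / (n₀ - 1)))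
        (((2 : ℝ) / (n₀ - 1)) * (u ξ * v ξ) ^ ((2 : ℝ) / (n₀ - 1) - 1) *
          (u ξ * (3 - u ξ - n₀ / (n₀ + 1) * v ξ) * v ξ +
            u ξ * (v ξ * (u ξ - 1 + (1 - n₀ / (n₀ + 1)) * v ξ)))) ξ := by
      exact (Real.hasDerivAt_rpow_const (Or.inl hwpos.ne')).comp ξ hw
    have hP : HasDerivAt (fun t =>
        (n₀ - 5) / (n₀ - 1) ^ 2 + 2 * v t / ((n₀ + 1) * (n₀ - 1)) -
          v t ^ 2 / (2 * (n₀ + 1) ^ 2) - u t * v t / (n₀ + 1) ^ 2)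
        ((2 * (v ξ * (u ξ - 1 + (1 - n₀ / (n₀ + 1)) * v ξ))) / ((n₀ + 1) * (n₀ - 1)) -
          ((2 : ℕ) * v ξ ^ (2 - 1) * (v ξ * (u ξ - 1 + (1 - n₀ / (n₀ + 1)) * v ξ))) /
            (2 * (n₀ + 1) ^ 2) -
          (u ξ * (3 - u ξ - n₀ / (n₀ + 1) * v ξ) * v ξ +
            u ξ * (v ξ * (u ξ - 1 + (1 - n₀ / (n₀ + 1)) * v ξ))) / (n₀ + 1) ^ 2) ξ := by
      have hA := (((hv ξ).const_mul 2).div_const ((n₀ + 1) * (n₀ - 1)))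
      have hB := (((hv ξ).pow 2).div_const (2 * (n₀ + 1) ^ 2))
      have hC := (((hu ξ).mul (hv ξ)).div_const ((n₀ + 1) ^ 2))
      have := (((hasDerivAt_const ξ ((n₀ - 5) / (n₀ - 1) ^ 2)).add hA).sub hB).sub hC
      convert this using 1
      · rfl
      · rfl
      · rfl
      · simp
    have hZ := hpow.mul hP
    simp only [Z2]
    convert hZ using 1
    · rfl
    · rfl
    · rfl
    -- algebraic identity
    have hrw : (u ξ * v ξ) ^ ((2 : ℝ) / (n₀ - 1) - 1)
        = (u ξ * v ξ) ^ ((2 : ℝ) / (n₀ - 1)) / (u ξ * v ξ) :=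
      Real.rpow_sub_one hwpos.ne' _
    rw [hrw]
    set W := (u ξ * v ξ) ^ ((2 : ℝ) / (n₀ - 1)) with hW
    set e := u ξ
    set f := v ξ
    have he : e ≠ 0 := (hup ξ).ne'
    have hf : f ≠ 0 := (hvp ξ).ne'
    have h1' : (n₀ - 1) ≠ 0 := h1.ne'
    have h2' : (n₀ + 1) ≠ 0 := h2.ne'
    rw [hκ]
    push_cast
    field_simp
    ring
  refine ⟨key, ?_, ?_, ?_⟩
  · intro h5
    have hκpos : 0 < κ := div_pos (by linarith) (by positivity)
    exact monotone_of_deriv_nonneg (fun ξ => (key ξ).differentiableAt) (fun ξ => by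
      rw [(key ξ).deriv]
      have := Real.rpow_nonneg (mul_pos (hup ξ) (hvp ξ)).le ((2 : ℝ) / (n₀ - 1))
      positivity)
  · intro h5
    have hκneg : κ < 0 := div_neg_of_neg_of_pos (by linarith) (by positivity)
    exact antitone_of_deriv_nonpos (fun ξ => (key ξ).differentiableAt) (fun ξ => by
      rw [(key ξ).deriv]
      have hnn := Real.rpow_nonneg (mul_pos (hup ξ) (hvp ξ)).le ((2 : ℝ) / (n₀ - 1))
      have hsq := sq_nonneg (2 * (n₀ + 1) - (n₀ - 1) * v ξ)
      nlinarith [mul_nonneg hnn hsq])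
  · intro h5 ξ₁ ξ₂
    have hκ0 : κ = 0 := by rw [hκ, h5]; norm_num
    exact is_const_of_deriv_eq_zero (fun ξ => (key ξ).differentiableAt) (fun ξ => by
      rw [(key ξ).deriv, hκ0]; ring) ξ₁ ξ₂
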